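/- (Norris's theorem) Let G be a directed multigraph with n nodes. For all nodes x, y of G, the views view_G(x) and view_G(y) are isomorphic if and only if their truncations to height n−1 are isomorphic: view_G(x)↾(n−1) ≅ view_G(y)↾(n−1). -/

import Mathlib

/-- A directed multigraph: node set `N`, arc set `A`, source and target maps. -/
structure Multigraph (N A : Type) where
  s : A → N
  t : A → N

/-- A homomorphism of directed multigraphs: maps on nodes and arcs commuting
with source and target. -/
structure GraphHom {N A N' A' : Type} (G : Multigraph N A) (B : Multigraph N' A') where
  nodeMap : N → N'
  arcMap : A → A'
  map_s : ∀ a, B.s (arcMap a) = nodeMap (G.s a)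
  map_t : ∀ a, B.t (arcMap a) = nodeMap (G.t a)

/-- A fibration: every arc of the base lifts uniquely at every node in the
fibre of its target. -/
def IsFibration {N A N' A' : Type} {G : Multigraph N A} {B : Multigraph N' A'}
    (φ : GraphHom G B) : Prop :=
  ∀ (a : A') (x : N), φ.nodeMap x = B.t a →
    ∃! a' : A, φ.arcMap a' = a ∧ G.t a' = x

/-- `IsPathTo G l x` : `l` is (the reversed arc list of) a path ending at `x`;
the head of `l` is the arc closest to `x`. The empty list is the empty path at `x`. -/
def IsPathTo {N A : Type} (G : Multigraph N A) : List A → N → Prop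
  | [], _ => True
  | a :: l, x => G.t a = x ∧ IsPathTo G l (G.s a)

/-- Nodes of the view (universal total graph) of `G` at `x`: finite paths ending at `x`. -/
abbrev View {N A : Type} (G : Multigraph N A) (x : N) := {l : List A // IsPathTo G l x}

/-- Isomorphism of views as rooted in-trees: a bijection of paths preserving the
root (the empty path) and the tree arc relation (`p` is obtained from `q` by
prepending one arc at the far end). -/
def ViewIso {N A : Type} (G : Multigraph N A) (x y : N) : Prop :=
  ∃ e : View G x ≃ View G y,
    ((e ⟨[], by simp [IsPathTo]⟩ : View G y) : List A) = [] ∧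
    ∀ p q : View G x,
      (∃ a, (p : List A) = (q : List A) ++ [a]) ↔
      (∃ a, ((e p : View G y) : List A) = ((e q : View G y) : List A) ++ [a])

/-- Nodes of the truncation at height `k` of the view of `G` at `x`. -/
abbrev ViewTrunc {N A : Type} (G : Multigraph N A) (x : N) (k : ℕ) :=
  {l : List A // IsPathTo G l x ∧ l.length ≤ k}

/-- Isomorphism of the height-`k` truncations of the views at `x` and `y`,
as rooted trees. -/
def ViewTruncIso {N A : Type} (G : Multigraph N A) (x y : N) (k : ℕ) : Prop :=
  ∃ e : ViewTrunc G x k ≃ ViewTrunc G y k,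
    ((e ⟨[], by simp [IsPathTo]⟩ : ViewTrunc G y k) : List A) = [] ∧
    ∀ p q : ViewTrunc G x k,
      (∃ a, (p : List A) = (q : List A) ++ [a]) ↔
      (∃ a, ((e p : ViewTrunc G y k) : List A) = ((e q : ViewTrunc G y k) : List A) ++ [a])

namespace NorrisProof



variable {A : Type} {P Q : List A → Prop}

/-- Predicate: `e` is a rooted-tree iso between the subtype trees. -/
def TIso (e : {l : List A // P l} ≃ {l // Q l}) (hP0 : P []) : Prop :=
  (e ⟨[], hP0⟩).1 = [] ∧
  ∀ p q : {l // P l}, (∃ a, p.1 = q.1 ++ [a]) ↔ (∃ a, (e p).1 = (e q).1 ++ [a])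

theorem tiso_length (e : {l : List A // P l} ≃ {l // Q l}) (hP0 : P [])
    (hPpre : ∀ l c, P (l ++ [c]) → P l) (h : TIso e hP0) :
    ∀ p : {l // P l}, (e p).1.length = p.1.length := by
  obtain ⟨hroot, hrel⟩ := h
  suffices H : ∀ (n : ℕ) (p : {l // P l}), p.1.length = n → (e p).1.length = p.1.length by
    intro p; exact H _ p rfl
  intro n
  induction n with
  | zero =>
    intro p hn
    have : p = ⟨[], hP0⟩ := Subtype.ext (List.eq_nil_of_length_eq_zero hn)
    rw [this, hroot]
  | succ n ih =>
    intro p hn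
    have hne : p.1 ≠ [] := by intro h; simp [h] at hn
    have hdec : p.1 = p.1.dropLast ++ [p.1.getLast hne] := (List.dropLast_append_getLast hne).symm
    set q : {l // P l} := ⟨p.1.dropLast, hPpre _ _ (hdec ▸ p.2)⟩ with hq
    obtain ⟨b, hb⟩ := (hrel p q).1 ⟨_, hdec⟩
    have hql : q.1.length = n := by
      simp [hq, List.length_dropLast, hn]
    have := ih q hql
    rw [hb]; simp [this, hql, hn]

theorem tiso_Q0 (e : {l : List A // P l} ≃ {l // Q l}) (hP0 : P [])
    (h : TIso e hP0) : Q [] := h.1 ▸ (e ⟨[], hP0⟩).2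

theorem tiso_symm (e : {l : List A // P l} ≃ {l // Q l}) (hP0 : P [])
    (h : TIso e hP0) (hQ0 : Q []) : TIso e.symm hQ0 := by
  obtain ⟨hroot, hrel⟩ := h
  constructor
  · have : e ⟨[], hP0⟩ = ⟨[], hQ0⟩ := Subtype.ext hroot
    rw [← this, Equiv.symm_apply_apply]
  · intro p q
    have := hrel (e.symm p) (e.symm q)
    simp only [Equiv.apply_symm_apply] at this
    exact this.symm

theorem prefix_closed (hPpre : ∀ l c, P (l ++ [c]) → P l) :
    ∀ l m, P (l ++ m) → P l := by
  intro l m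
  induction m using List.reverseRecOn generalizing l with
  | nil => simp
  | append_singleton m c ih =>
    intro h
    rw [← List.append_assoc] at h
    exact ih l (hPpre _ _ h)

theorem tiso_head (e : {l : List A // P l} ≃ {l // Q l}) (hP0 : P [])
    (hPpre : ∀ l c, P (l ++ [c]) → P l) (h : TIso e hP0) :
    ∀ (p : {l // P l}) (a : A) (m : List A), p.1 = a :: m →
      ∀ hPa : P [a], (e p).1.head? = (e ⟨[a], hPa⟩).1.head? := by
  have hlen := tiso_length e hP0 hPpre h
  obtain ⟨hroot, hrel⟩ := h
  suffices H : ∀ (n : ℕ) (p : {l // P l}), p.1.length = n → ∀ (a : A) (m : List A),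
      p.1 = a :: m → ∀ hPa : P [a], (e p).1.head? = (e ⟨[a], hPa⟩).1.head? by
    intro p a m hp hPa; exact H _ p rfl a m hp hPa
  intro n
  induction n with
  | zero => intro p hn a m hp hPa; rw [hp] at hn; simp at hn
  | succ n ih =>
    intro p hn a m hp hPa
    rcases Nat.eq_zero_or_pos n with h0 | hpos
    · -- m = [], p = [a]
      have hm : m = [] := by
        rw [hp] at hn; simp [h0] at hn; exact hn
      have : p = ⟨[a], hPa⟩ := Subtype.ext (by rw [hp, hm])
      rw [this]
    · have hne : p.1 ≠ [] := by rw [hp]; simp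
      have hdec : p.1 = p.1.dropLast ++ [p.1.getLast hne] := (List.dropLast_append_getLast hne).symm
      set q : {l // P l} := ⟨p.1.dropLast, hPpre _ _ (hdec ▸ p.2)⟩ with hq
      obtain ⟨b, hb⟩ := (hrel p q).1 ⟨_, hdec⟩
      have hql : q.1.length = n := by simp [hq, List.length_dropLast, hn]
      have hqhead : q.1 = a :: m.dropLast := by
        have hm : m ≠ [] := by
          intro hm; rw [hp, hm] at hn; simp at hn; omega
        simp [hq, hp, List.dropLast_cons_of_ne_nil hm]
      have hih := ih q hql a m.dropLast hqhead hPa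
      rw [hb]
      have hqne : (e q).1 ≠ [] := by
        intro hnil
        have := hlen q
        rw [hnil] at this
        simp [hql] at this
        omega
      rw [← hih]
      obtain ⟨c, t, hct⟩ := List.exists_cons_of_ne_nil hqne
      rw [hct]; simp


end NorrisProof

namespace NorrisProof

variable {N A : Type} {G : Multigraph N A}

theorem isPathTo_nil {x : N} : IsPathTo G [] x := trivial

theorem isPathTo_cons {a : A} {l : List A} {x : N} :
    IsPathTo G (a :: l) x ↔ G.t a = x ∧ IsPathTo G l (G.s a) := Iff.rfl

theorem isPathTo_head {l : List A} {x : N} (hne : l ≠ []) (h : IsPathTo G l x) :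
    G.t (l.head hne) = x := by
  cases l with
  | nil => simp at hne
  | cons a m => exact h.1

theorem isPathTo_dropLast {l : List A} {c : A} {x : N} (h : IsPathTo G (l ++ [c]) x) :
    IsPathTo G l x := by
  induction l generalizing x with
  | nil => trivial
  | cons a m ih => exact ⟨h.1, ih h.2⟩

theorem viewIso_tiso {x y : N} :
    ViewIso G x y ↔ ∃ e : View G x ≃ View G y, TIso e isPathTo_nil := Iff.rfl

theorem viewTruncIso_tiso {x y : N} {k : ℕ} :
    ViewTruncIso G x y k ↔ ∃ e : ViewTrunc G x k ≃ ViewTrunc G y k,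
      TIso e ⟨isPathTo_nil, Nat.zero_le k⟩ := Iff.rfl

theorem trunc_pre {x : N} {k : ℕ} :
    ∀ (l : List A) (c : A), (fun l => IsPathTo G l x ∧ l.length ≤ k) (l ++ [c]) →
      (fun l => IsPathTo G l x ∧ l.length ≤ k) l := by
  intro l c h
  exact ⟨isPathTo_dropLast h.1, by simp at h; omega⟩

theorem view_pre {x : N} :
    ∀ (l : List A) (c : A), (fun l => IsPathTo G l x) (l ++ [c]) →
      (fun l => IsPathTo G l x) l := fun _ _ h => isPathTo_dropLast h

end NorrisProof

namespace NorrisProof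

theorem eq_singleton_head {α : Type*} {l : List α} (h : l.length = 1) (hne : l ≠ []) :
    l = [l.head hne] := by
  cases l with
  | nil => simp at hne
  | cons c t =>
    simp at h
    simp [h]

theorem head_eq_of_eq_singleton {α : Type*} {l : List α} {c : α} (h : l = [c]) (hne : l ≠ []) :
    l.head hne = c := by subst h; rfl

variable {N A : Type} {G : Multigraph N A}

theorem trunc_succ_decomp {x y : N} {k : ℕ} (h : ViewTruncIso G x y (k + 1)) :
    ∃ θ : {a : A // G.t a = x} ≃ {b : A // G.t b = y},
      ∀ a : {a : A // G.t a = x}, ViewTruncIso G (G.s a.1) (G.s (θ a).1) k := by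
  obtain ⟨e, he⟩ := viewTruncIso_tiso.1 h
  have hlen := tiso_length e _ trunc_pre he
  have hQ0 : IsPathTo G ([] : List A) y ∧ ([] : List A).length ≤ k + 1 :=
    ⟨isPathTo_nil, by simp⟩
  have hes := tiso_symm e _ he hQ0
  have hlens := tiso_length e.symm _ trunc_pre hes
  have hpa : ∀ a : {a : A // G.t a = x},
      IsPathTo G [a.1] x ∧ ([a.1] : List A).length ≤ k + 1 :=
    fun a => ⟨⟨a.2, trivial⟩, by simp⟩
  have hpb : ∀ b : {b : A // G.t b = y},
      IsPathTo G [b.1] y ∧ ([b.1] : List A).length ≤ k + 1 :=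
    fun b => ⟨⟨b.2, trivial⟩, by simp⟩
  have hne1 : ∀ a : {a : A // G.t a = x}, (e ⟨[a.1], hpa a⟩).1 ≠ [] := by
    intro a hnil
    have := hlen ⟨[a.1], hpa a⟩
    rw [hnil] at this; simp at this
  have hne1s : ∀ b : {b : A // G.t b = y}, (e.symm ⟨[b.1], hpb b⟩).1 ≠ [] := by
    intro b hnil
    have := hlens ⟨[b.1], hpb b⟩
    rw [hnil] at this; simp at this
  set f : {a : A // G.t a = x} → {b : A // G.t b = y} :=
    fun a => ⟨(e ⟨[a.1], hpa a⟩).1.head (hne1 a),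
      isPathTo_head _ (e ⟨[a.1], hpa a⟩).2.1⟩ with hf
  set g : {b : A // G.t b = y} → {a : A // G.t a = x} :=
    fun b => ⟨(e.symm ⟨[b.1], hpb b⟩).1.head (hne1s b),
      isPathTo_head _ (e.symm ⟨[b.1], hpb b⟩).2.1⟩ with hg
  have hsing : ∀ a : {a : A // G.t a = x}, (e ⟨[a.1], hpa a⟩).1 = [(f a).1] := by
    intro a
    exact eq_singleton_head (by rw [hlen]; rfl) (hne1 a)
  have hsings : ∀ b : {b : A // G.t b = y}, (e.symm ⟨[b.1], hpb b⟩).1 = [(g b).1] := by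
    intro b
    exact eq_singleton_head (by rw [hlens]; rfl) (hne1s b)
  have hgf : ∀ a, g (f a) = a := by
    intro a
    have h2 : (⟨[(f a).1], hpb (f a)⟩ : ViewTrunc G y (k+1)) = e ⟨[a.1], hpa a⟩ :=
      Subtype.ext (hsing a).symm
    have h3 : (e.symm ⟨[(f a).1], hpb (f a)⟩).1 = [a.1] := by
      rw [h2, Equiv.symm_apply_apply]
    exact Subtype.ext (head_eq_of_eq_singleton h3 _)
  have hfg : ∀ b, f (g b) = b := by
    intro b
    have h2 : (⟨[(g b).1], hpa (g b)⟩ : ViewTrunc G x (k+1)) = e.symm ⟨[b.1], hpb b⟩ :=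
      Subtype.ext (hsings b).symm
    have h3 : (e ⟨[(g b).1], hpa (g b)⟩).1 = [b.1] := by
      rw [h2, Equiv.apply_symm_apply]
    exact Subtype.ext (head_eq_of_eq_singleton h3 _)
  refine ⟨⟨f, g, hgf, hfg⟩, ?_⟩
  intro a
  show ViewTruncIso G (G.s a.1) (G.s (f a).1) k
  -- the embedding of the subtree under [a]
  set pm : ViewTrunc G (G.s a.1) k → ViewTrunc G x (k+1) :=
    fun m => ⟨a.1 :: m.1, ⟨a.2, m.2.1⟩, by simpa using Nat.succ_le_succ m.2.2⟩ with hpm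
  set pm' : ViewTrunc G (G.s (f a).1) k → ViewTrunc G y (k+1) :=
    fun m => ⟨(f a).1 :: m.1, ⟨(f a).2, m.2.1⟩, by simpa using Nat.succ_le_succ m.2.2⟩ with hpm'
  have hlenpm : ∀ m, (e (pm m)).1.length = m.1.length + 1 := by
    intro m; rw [hlen]; simp [hpm]
  have hlenpm' : ∀ m, (e.symm (pm' m)).1.length = m.1.length + 1 := by
    intro m; rw [hlens]; simp [hpm']
  have hnepm : ∀ m, (e (pm m)).1 ≠ [] := by
    intro m hnil; have := hlenpm m; rw [hnil] at this; simp at this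
  have hnepm' : ∀ m, (e.symm (pm' m)).1 ≠ [] := by
    intro m hnil; have := hlenpm' m; rw [hnil] at this; simp at this
  have key1 : ∀ m, (e (pm m)).1 = (f a).1 :: (e (pm m)).1.tail := by
    intro m
    have hh := tiso_head e _ trunc_pre he (pm m) a.1 m.1 rfl (hpa a)
    rw [hsing a] at hh
    have h4 : (e (pm m)).1.head? = some ((e (pm m)).1.head (hnepm m)) :=
      List.head?_eq_head _
    rw [h4] at hh
    simp at hh
    conv_lhs => rw [← List.cons_head_tail (hnepm m)]
    rw [hh]
  have h3 : (e.symm ⟨[(f a).1], hpb (f a)⟩).1 = [a.1] := by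
    have h2 : (⟨[(f a).1], hpb (f a)⟩ : ViewTrunc G y (k+1)) = e ⟨[a.1], hpa a⟩ :=
      Subtype.ext (hsing a).symm
    rw [h2, Equiv.symm_apply_apply]
  have key2 : ∀ m, (e.symm (pm' m)).1 = a.1 :: (e.symm (pm' m)).1.tail := by
    intro m
    have hh := tiso_head e.symm _ trunc_pre hes (pm' m) (f a).1 m.1 rfl (hpb (f a))
    rw [h3] at hh
    have h4 : (e.symm (pm' m)).1.head? = some ((e.symm (pm' m)).1.head (hnepm' m)) :=
      List.head?_eq_head _
    rw [h4] at hh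
    simp at hh
    conv_lhs => rw [← List.cons_head_tail (hnepm' m)]
    rw [hh]
  -- tails as elements of the truncated views
  have tailmem : ∀ m, IsPathTo G (e (pm m)).1.tail (G.s (f a).1) ∧
      (e (pm m)).1.tail.length ≤ k := by
    intro m
    constructor
    · have hp := (e (pm m)).2.1
      rw [key1 m] at hp
      exact hp.2
    · have := hlenpm m
      have h5 : (e (pm m)).1.tail.length = (e (pm m)).1.length - 1 := by
        simp [List.length_tail]
      omega
  have tailmem' : ∀ m, IsPathTo G (e.symm (pm' m)).1.tail (G.s a.1) ∧
      (e.symm (pm' m)).1.tail.length ≤ k := by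
    intro m
    constructor
    · have hp := (e.symm (pm' m)).2.1
      rw [key2 m] at hp
      exact hp.2
    · have := hlenpm' m
      have h5 : (e.symm (pm' m)).1.tail.length = (e.symm (pm' m)).1.length - 1 := by
        simp [List.length_tail]
      omega
  refine viewTruncIso_tiso.2 ⟨⟨fun m => ⟨(e (pm m)).1.tail, tailmem m⟩,
    fun m => ⟨(e.symm (pm' m)).1.tail, tailmem' m⟩, ?_, ?_⟩, ?_, ?_⟩
  · -- left inverse
    intro m
    apply Subtype.ext
    show (e.symm (pm' ⟨(e (pm m)).1.tail, tailmem m⟩)).1.tail = m.1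
    have h6 : pm' ⟨(e (pm m)).1.tail, tailmem m⟩ = e (pm m) :=
      Subtype.ext (key1 m).symm
    rw [h6, Equiv.symm_apply_apply]
    rfl
  · -- right inverse
    intro m
    apply Subtype.ext
    show (e (pm ⟨(e.symm (pm' m)).1.tail, tailmem' m⟩)).1.tail = m.1
    have h6 : pm ⟨(e.symm (pm' m)).1.tail, tailmem' m⟩ = e.symm (pm' m) :=
      Subtype.ext (key2 m).symm
    rw [h6, Equiv.apply_symm_apply]
    rfl
  · -- root
    show (e (pm ⟨[], ⟨isPathTo_nil, Nat.zero_le k⟩⟩)).1.tail = []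
    have h7 : pm ⟨[], ⟨isPathTo_nil, Nat.zero_le k⟩⟩ = ⟨[a.1], hpa a⟩ := Subtype.ext rfl
    rw [h7, hsing a]
    rfl
  · -- arc relation
    intro m m₀
    constructor
    · rintro ⟨c, hc⟩
      obtain ⟨d, hd⟩ := (he.2 (pm m) (pm m₀)).1
        ⟨c, by show a.1 :: m.1 = (a.1 :: m₀.1) ++ [c]; rw [hc]; rfl⟩
      refine ⟨d, ?_⟩
      rw [key1 m, key1 m₀] at hd
      simpa using hd
    · rintro ⟨d, hd⟩
      obtain ⟨c, hc⟩ := (he.2 (pm m) (pm m₀)).2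
        ⟨d, by
          have hd' : (e (pm m)).1.tail = (e (pm m₀)).1.tail ++ [d] := hd
          rw [key1 m, key1 m₀, hd']; rfl⟩
      refine ⟨c, ?_⟩
      have : a.1 :: m.1 = (a.1 :: m₀.1) ++ [c] := hc
      simpa using this

end NorrisProof

namespace NorrisProof

open Classical in
/-- Assembly function at the list level. -/
noncomputable def asmFun {N A : Type} (G : Multigraph N A) (x y : N) (k : ℕ)
    (θ : {a : A // G.t a = x} → {b : A // G.t b = y})
    (ea : ∀ a : {a : A // G.t a = x}, ViewTrunc G (G.s a.1) k → ViewTrunc G (G.s (θ a).1) k) :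
    List A → List A
  | [] => []
  | a :: m =>
    if h : G.t a = x ∧ IsPathTo G m (G.s a) ∧ m.length ≤ k
    then (θ ⟨a, h.1⟩).1 :: (ea ⟨a, h.1⟩ ⟨m, h.2.1, h.2.2⟩).1
    else []

variable {N A : Type} {G : Multigraph N A}

theorem asmFun_nil {x y : N} {k : ℕ} {θ} {ea} : asmFun G x y k θ ea [] = [] := rfl

theorem asmFun_cons {x y : N} {k : ℕ} {θ} {ea} (a : A) (m : List A)
    (h : G.t a = x ∧ IsPathTo G m (G.s a) ∧ m.length ≤ k) :
    asmFun G x y k θ ea (a :: m)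
      = (θ ⟨a, h.1⟩).1 :: (ea ⟨a, h.1⟩ ⟨m, h.2.1, h.2.2⟩).1 := by
  simp only [asmFun]
  rw [dif_pos h]

theorem trunc_succ_assemble {x y : N} {k : ℕ}
    (θ : {a : A // G.t a = x} ≃ {b : A // G.t b = y})
    (h : ∀ a : {a : A // G.t a = x}, ViewTruncIso G (G.s a.1) (G.s (θ a).1) k) :
    ViewTruncIso G x y (k + 1) := by
  choose ea hea using fun a => viewTruncIso_tiso.1 (h a)
  have hlen : ∀ a m, ((ea a) m).1.length = m.1.length :=
    fun a => tiso_length _ _ trunc_pre (hea a)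
  set F : List A → List A := asmFun G x y k (fun a => θ a) (fun a m => ea a m) with hF
  have Fcons : ∀ (a : A) (m : List A) (hc : G.t a = x ∧ IsPathTo G m (G.s a) ∧ m.length ≤ k),
      F (a :: m) = (θ ⟨a, hc.1⟩).1 :: (ea ⟨a, hc.1⟩ ⟨m, hc.2.1, hc.2.2⟩).1 :=
    fun a m hc => asmFun_cons a m hc
  have Fvalid : ∀ l, IsPathTo G l x → l.length ≤ k + 1 →
      IsPathTo G (F l) y ∧ (F l).length = l.length := by
    intro l hp hl
    cases l with
    | nil => exact ⟨isPathTo_nil, rfl⟩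
    | cons a m =>
      have hc : G.t a = x ∧ IsPathTo G m (G.s a) ∧ m.length ≤ k :=
        ⟨hp.1, hp.2, by simp at hl; omega⟩
      rw [Fcons a m hc]
      refine ⟨⟨(θ ⟨a, hc.1⟩).2, (ea ⟨a, hc.1⟩ ⟨m, hc.2.1, hc.2.2⟩).2.1⟩, ?_⟩
      simp [hlen]
  set FF : ViewTrunc G x (k + 1) → ViewTrunc G y (k + 1) :=
    fun p => ⟨F p.1, (Fvalid p.1 p.2.1 p.2.2).1, by
      rw [(Fvalid p.1 p.2.1 p.2.2).2]; exact p.2.2⟩ with hFF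
  have hinj : Function.Injective FF := by
    rintro ⟨lp, hp⟩ ⟨lq, hq⟩ hpq
    have hpq' : F lp = F lq := congrArg Subtype.val hpq
    apply Subtype.ext
    show lp = lq
    clear hpq
    induction lp generalizing lq with
    | nil =>
      cases lq with
      | nil => rfl
      | cons a m =>
        have hc : G.t a = x ∧ IsPathTo G m (G.s a) ∧ m.length ≤ k :=
          ⟨hq.1.1, hq.1.2, by have := hq.2; simp at this; omega⟩
        rw [Fcons a m hc] at hpq'
        exact absurd hpq'.symm (List.cons_ne_nil _ _)
    | cons a m ih =>
      have hc : G.t a = x ∧ IsPathTo G m (G.s a) ∧ m.length ≤ k :=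
        ⟨hp.1.1, hp.1.2, by have := hp.2; simp at this; omega⟩
      cases lq with
      | nil =>
        rw [Fcons a m hc] at hpq'
        exact absurd hpq' (List.cons_ne_nil _ _)
      | cons a' m' =>
        have hc' : G.t a' = x ∧ IsPathTo G m' (G.s a') ∧ m'.length ≤ k :=
          ⟨hq.1.1, hq.1.2, by have := hq.2; simp at this; omega⟩
        rw [Fcons a m hc, Fcons a' m' hc'] at hpq'
        have h1 : (θ ⟨a, hc.1⟩).1 = (θ ⟨a', hc'.1⟩).1 := (List.cons.injEq _ _ _ _ ▸ hpq').1
        have h2 : (⟨a, hc.1⟩ : {a : A // G.t a = x}) = ⟨a', hc'.1⟩ :=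
          θ.injective (Subtype.ext h1)
        have haa : a = a' := congrArg Subtype.val h2
        subst haa
        have h3 : (ea ⟨a, hc.1⟩ ⟨m, hc.2.1, hc.2.2⟩).1
            = (ea ⟨a, hc.1⟩ ⟨m', hc'.2.1, hc'.2.2⟩).1 := (List.cons.injEq _ _ _ _ ▸ hpq').2
        have h4 := (ea ⟨a, hc.1⟩).injective (Subtype.ext h3)
        exact congrArg (List.cons a) (congrArg Subtype.val h4)
  have hsurj : Function.Surjective FF := by
    rintro ⟨l', hl'⟩
    cases l' with
    | nil => exact ⟨⟨[], isPathTo_nil, by simp⟩, Subtype.ext rfl⟩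
    | cons b m' =>
      have hb : G.t b = y := hl'.1.1
      set a := θ.symm ⟨b, hb⟩ with ha
      have hba : (θ a).1 = b := congrArg Subtype.val (θ.apply_symm_apply ⟨b, hb⟩)
      have hm' : IsPathTo G m' (G.s (θ a).1) := by rw [hba]; exact hl'.1.2
      have hml : m'.length ≤ k := by have := hl'.2; simp at this; omega
      obtain ⟨m, hm⟩ := (ea a).surjective ⟨m', hm', hml⟩
      refine ⟨⟨a.1 :: m.1, ⟨a.2, m.2.1⟩, by simpa using Nat.succ_le_succ m.2.2⟩, ?_⟩
      apply Subtype.ext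
      show F (a.1 :: m.1) = b :: m'
      rw [Fcons a.1 m.1 ⟨a.2, m.2.1, m.2.2⟩]
      show (θ a).1 :: (ea a m).1 = b :: m'
      rw [hm]
      show (θ a).1 :: m' = b :: m'
      rw [hba]
  refine viewTruncIso_tiso.2 ⟨Equiv.ofBijective FF ⟨hinj, hsurj⟩, ?_, ?_⟩
  · show F [] = []
    rfl
  · intro p q
    constructor
    · rintro ⟨c, hcq⟩
      obtain ⟨lq, hq⟩ := q
      obtain ⟨lp, hp⟩ := p
      simp only at hcq
      show ∃ d, F lp = F lq ++ [d]
      subst hcq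
      cases lq with
      | nil =>
        have hc : G.t c = x ∧ IsPathTo G [] (G.s c) ∧ ([] : List A).length ≤ k :=
          ⟨hp.1.1, isPathTo_nil, by simp⟩
        refine ⟨(θ ⟨c, hc.1⟩).1, ?_⟩
        show F [c] = F [] ++ [(θ ⟨c, hc.1⟩).1]
        rw [Fcons c [] hc]
        have hroot := (hea ⟨c, hc.1⟩).1
        show (θ ⟨c, hc.1⟩).1 :: (ea ⟨c, hc.1⟩ ⟨[], hc.2.1, hc.2.2⟩).1 = [] ++ _
        rw [hroot]
        rfl
      | cons a m₀ =>
        have hcp : G.t a = x ∧ IsPathTo G (m₀ ++ [c]) (G.s a) ∧ (m₀ ++ [c]).length ≤ k :=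
          ⟨hp.1.1, hp.1.2, by have := hp.2; simp at this ⊢; omega⟩
        have hcq' : G.t a = x ∧ IsPathTo G m₀ (G.s a) ∧ m₀.length ≤ k :=
          ⟨hq.1.1, hq.1.2, by have := hq.2; simp at this; omega⟩
        obtain ⟨d, hd⟩ := ((hea ⟨a, hcp.1⟩).2 ⟨m₀ ++ [c], hcp.2.1, hcp.2.2⟩
          ⟨m₀, hcq'.2.1, hcq'.2.2⟩).1 ⟨c, rfl⟩
        refine ⟨d, ?_⟩
        show F (a :: (m₀ ++ [c])) = F (a :: m₀) ++ [d]
        rw [Fcons a (m₀ ++ [c]) hcp, Fcons a m₀ hcq']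
        rw [hd]
        rfl
    · rintro ⟨d, hd⟩
      obtain ⟨lq, hq⟩ := q
      obtain ⟨lp, hp⟩ := p
      have hd' : F lp = F lq ++ [d] := hd
      show ∃ c, lp = lq ++ [c]
      cases lp with
      | nil =>
        rw [show F [] = [] from rfl] at hd'
        exact absurd hd'.symm (List.append_ne_nil_of_right_ne_nil _ (by simp))
      | cons a m =>
        have hcp : G.t a = x ∧ IsPathTo G m (G.s a) ∧ m.length ≤ k :=
          ⟨hp.1.1, hp.1.2, by have := hp.2; simp at this; omega⟩
        rw [Fcons a m hcp] at hd'
        cases lq with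
        | nil =>
          rw [show F [] = [] from rfl] at hd'
          simp at hd'
          have hm0 : m.length = 0 := by
            have := hlen ⟨a, hcp.1⟩ ⟨m, hcp.2.1, hcp.2.2⟩
            rw [hd'.2] at this
            simpa using this.symm
          have : m = [] := List.eq_nil_of_length_eq_zero hm0
          exact ⟨a, by rw [this]; rfl⟩
        | cons a' m₀ =>
          have hcq : G.t a' = x ∧ IsPathTo G m₀ (G.s a') ∧ m₀.length ≤ k :=
            ⟨hq.1.1, hq.1.2, by have := hq.2; simp at this; omega⟩
          rw [Fcons a' m₀ hcq] at hd'
          rw [List.cons_append] at hd'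
          have h1 : (θ ⟨a, hcp.1⟩).1 = (θ ⟨a', hcq.1⟩).1 := (List.cons.injEq _ _ _ _ ▸ hd').1
          have h2 : (⟨a, hcp.1⟩ : {a : A // G.t a = x}) = ⟨a', hcq.1⟩ :=
            θ.injective (Subtype.ext h1)
          have haa : a = a' := congrArg Subtype.val h2
          subst haa
          have h3 : (ea ⟨a, hcp.1⟩ ⟨m, hcp.2.1, hcp.2.2⟩).1
              = (ea ⟨a, hcp.1⟩ ⟨m₀, hcq.2.1, hcq.2.2⟩).1 ++ [d] := (List.cons.injEq _ _ _ _ ▸ hd').2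
          obtain ⟨c, hc⟩ := ((hea ⟨a, hcp.1⟩).2 ⟨m, hcp.2.1, hcp.2.2⟩
            ⟨m₀, hcq.2.1, hcq.2.2⟩).2 ⟨d, h3⟩
          exact ⟨c, by show a :: m = (a :: m₀) ++ [c]; rw [show m = m₀ ++ [c] from hc]; rfl⟩

end NorrisProof

namespace NorrisProof

section Generic
variable {A : Type} {P Q P' Q' : List A → Prop}

/-- Transport a tree iso along pointwise-equivalent predicates. -/
theorem tiso_congr (e : {l : List A // P l} ≃ {l // Q l}) (hP0 : P [])
    (h : TIso e hP0) (h1 : ∀ l, P l ↔ P' l) (h2 : ∀ l, Q l ↔ Q' l) :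
    ∃ e' : {l : List A // P' l} ≃ {l // Q' l}, TIso e' ((h1 []).1 hP0) := by
  refine ⟨⟨fun p => ⟨(e ⟨p.1, (h1 p.1).2 p.2⟩).1, (h2 _).1 (e ⟨p.1, (h1 p.1).2 p.2⟩).2⟩,
    fun q => ⟨(e.symm ⟨q.1, (h2 q.1).2 q.2⟩).1, (h1 _).1 (e.symm ⟨q.1, (h2 q.1).2 q.2⟩).2⟩,
    ?_, ?_⟩, ?_, ?_⟩
  · intro p
    apply Subtype.ext
    show (e.symm (e ⟨p.1, (h1 p.1).2 p.2⟩)).1 = p.1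
    rw [Equiv.symm_apply_apply]
  · intro q
    apply Subtype.ext
    show (e (e.symm ⟨q.1, (h2 q.1).2 q.2⟩)).1 = q.1
    rw [Equiv.apply_symm_apply]
  · show (e ⟨[], hP0⟩).1 = []
    exact h.1
  · intro p q
    exact h.2 ⟨p.1, (h1 p.1).2 p.2⟩ ⟨q.1, (h1 q.1).2 q.2⟩

/-- Restrict a tree iso to bounded length. -/
theorem tiso_restrict (e : {l : List A // P l} ≃ {l // Q l}) (hP0 : P [])
    (hPpre : ∀ l c, P (l ++ [c]) → P l) (h : TIso e hP0) (k : ℕ) :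
    ∃ e' : {l : List A // P l ∧ l.length ≤ k} ≃ {l // Q l ∧ l.length ≤ k},
      TIso e' ⟨hP0, Nat.zero_le k⟩ := by
  have hlen := tiso_length e hP0 hPpre h
  have hQ0 : Q [] := tiso_Q0 e hP0 h
  have hlens : ∀ q, (e.symm q).1.length = q.1.length := by
    intro q
    have := hlen (e.symm q)
    rw [Equiv.apply_symm_apply] at this
    exact this.symm
  refine ⟨⟨fun p => ⟨(e ⟨p.1, p.2.1⟩).1, (e ⟨p.1, p.2.1⟩).2, by rw [hlen]; exact p.2.2⟩,
    fun q => ⟨(e.symm ⟨q.1, q.2.1⟩).1, (e.symm ⟨q.1, q.2.1⟩).2, by rw [hlens]; exact q.2.2⟩,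
    ?_, ?_⟩, ?_, ?_⟩
  · intro p
    apply Subtype.ext
    show (e.symm (e ⟨p.1, p.2.1⟩)).1 = p.1
    rw [Equiv.symm_apply_apply]
  · intro q
    apply Subtype.ext
    show (e (e.symm ⟨q.1, q.2.1⟩)).1 = q.1
    rw [Equiv.apply_symm_apply]
  · show (e ⟨[], hP0⟩).1 = []
    exact h.1
  · intro p q
    exact h.2 ⟨p.1, p.2.1⟩ ⟨q.1, q.2.1⟩
end Generic

variable {N A : Type} {G : Multigraph N A}

theorem viewTruncIso_of_viewIso {x y : N} (h : ViewIso G x y) (k : ℕ) :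
    ViewTruncIso G x y k := by
  obtain ⟨e, he⟩ := viewIso_tiso.1 h
  obtain ⟨e', he'⟩ := tiso_restrict e isPathTo_nil view_pre he k
  exact viewTruncIso_tiso.2 ⟨e', he'⟩

theorem viewTruncIso_anti {x y : N} {k k' : ℕ} (hkk : k' ≤ k)
    (h : ViewTruncIso G x y k) : ViewTruncIso G x y k' := by
  obtain ⟨e, he⟩ := viewTruncIso_tiso.1 h
  obtain ⟨e', he'⟩ := tiso_restrict e ⟨isPathTo_nil, Nat.zero_le k⟩ trunc_pre he k'
  obtain ⟨e'', he''⟩ := tiso_congr e' ⟨⟨isPathTo_nil, Nat.zero_le k⟩, Nat.zero_le k'⟩ he'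
    (P' := fun l => IsPathTo G l x ∧ l.length ≤ k')
    (Q' := fun l => IsPathTo G l y ∧ l.length ≤ k')
    (fun l => ⟨fun hl => ⟨hl.1.1, hl.2⟩, fun hl => ⟨⟨hl.1, le_trans hl.2 hkk⟩, hl.2⟩⟩)
    (fun l => ⟨fun hl => ⟨hl.1.1, hl.2⟩, fun hl => ⟨⟨hl.1, le_trans hl.2 hkk⟩, hl.2⟩⟩)
  exact viewTruncIso_tiso.2 ⟨e'', he''⟩

theorem viewTruncIso_refl (x : N) (k : ℕ) : ViewTruncIso G x x k :=
  ⟨Equiv.refl _, rfl, fun _ _ => Iff.rfl⟩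

theorem viewTruncIso_symm {x y : N} {k : ℕ} (h : ViewTruncIso G x y k) :
    ViewTruncIso G y x k := by
  obtain ⟨e, he⟩ := viewTruncIso_tiso.1 h
  exact viewTruncIso_tiso.2 ⟨e.symm, tiso_symm e _ he _⟩

theorem viewTruncIso_trans {x y z : N} {k : ℕ} (h1 : ViewTruncIso G x y k)
    (h2 : ViewTruncIso G y z k) : ViewTruncIso G x z k := by
  obtain ⟨e1, he1⟩ := viewTruncIso_tiso.1 h1
  obtain ⟨e2, he2⟩ := viewTruncIso_tiso.1 h2
  refine viewTruncIso_tiso.2 ⟨e1.trans e2, ?_, ?_⟩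
  · show (e2 (e1 ⟨[], _⟩)).1 = []
    have : e1 ⟨[], ⟨isPathTo_nil, Nat.zero_le k⟩⟩ = ⟨[], ⟨isPathTo_nil, Nat.zero_le k⟩⟩ :=
      Subtype.ext he1.1
    rw [this]
    exact he2.1
  · intro p q
    exact (he1.2 p q).trans (he2.2 (e1 p) (e1 q))

theorem viewTruncIso_zero (x y : N) : ViewTruncIso G x y 0 := by
  have hval : ∀ (z : N) (p : ViewTrunc G z 0), p.1 = [] := by
    intro z p
    exact List.eq_nil_of_length_eq_zero (Nat.le_zero.1 p.2.2)
  refine ⟨⟨fun _ => ⟨[], isPathTo_nil, le_refl 0⟩, fun _ => ⟨[], isPathTo_nil, le_refl 0⟩,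
    fun p => Subtype.ext (hval x p).symm, fun q => Subtype.ext (hval y q).symm⟩, rfl, ?_⟩
  intro p q
  constructor
  · rintro ⟨a, ha⟩
    rw [hval x p, hval x q] at ha
    simp at ha
  · rintro ⟨a, ha⟩
    simp at ha

end NorrisProof

namespace NorrisProof

variable {N A : Type} {G : Multigraph N A}

theorem stabilize_step {k : ℕ}
    (hst : ∀ u v : N, ViewTruncIso G u v k → ViewTruncIso G u v (k + 1)) :
    ∀ u v : N, ViewTruncIso G u v (k + 1) → ViewTruncIso G u v (k + 2) := by
  intro u v h
  obtain ⟨θ, hθ⟩ := trunc_succ_decomp h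
  exact trunc_succ_assemble θ (fun a => hst _ _ (hθ a))

theorem exists_stable [Fintype N] (G : Multigraph N A) (x0 : N) :
    ∃ k ≤ Fintype.card N - 1,
      ∀ u v : N, ViewTruncIso G u v k → ViewTruncIso G u v (k + 1) := by
  classical
  by_contra hcon
  push_neg at hcon
  set n := Fintype.card N with hn
  set sk : ℕ → Setoid N := fun k => ⟨fun u v => ViewTruncIso G u v k,
    ⟨fun u => viewTruncIso_refl u k, fun h => viewTruncIso_symm h,
      fun h1 h2 => viewTruncIso_trans h1 h2⟩⟩ with hsk
  haveI inst : ∀ k, Fintype (Quotient (sk k)) := fun k => Fintype.ofFinite _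
  set c : ℕ → ℕ := fun k => Fintype.card (Quotient (sk k)) with hc
  have hub : ∀ k, c k ≤ n := by
    intro k
    exact Fintype.card_le_of_surjective (Quotient.mk (sk k)) Quotient.mk_surjective
  have hstep : ∀ k, k ≤ n - 1 → c k < c (k + 1) := by
    intro k hk
    obtain ⟨u, v, huv, hnuv⟩ := hcon k hk
    set φ : Quotient (sk (k + 1)) → Quotient (sk k) := fun q =>
      Quotient.liftOn q (fun w => Quotient.mk (sk k) w)
        (fun a b hab => Quotient.sound (viewTruncIso_anti (Nat.le_succ k) hab)) with hφ
    apply Fintype.card_lt_of_surjective_not_injective φ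
    · intro q
      refine q.inductionOn (fun w => ⟨Quotient.mk _ w, rfl⟩)
    · intro hinj
      have h1 : φ (Quotient.mk _ u) = φ (Quotient.mk _ v) := Quotient.sound huv
      have h2 := hinj h1
      exact hnuv (Quotient.exact h2)
  have hlb : ∀ j, j ≤ n → j + 1 ≤ c j := by
    intro j
    induction j with
    | zero =>
      intro _
      have : 0 < c 0 := Fintype.card_pos_iff.2 ⟨Quotient.mk _ x0⟩
      omega
    | succ j ih =>
      intro hj
      have hn1 : 1 ≤ n := by
        rw [hn]
        exact Fintype.card_pos_iff.2 ⟨x0⟩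
      have h1 := ih (by omega)
      have h2 := hstep j (by omega)
      omega
  have h1 := hlb n (le_refl n)
  have h2 := hub n
  omega

end NorrisProof

namespace NorrisProof

variable {N A : Type}

open Classical in
/-- Recursively build an image path, given chosen arc bijections for a
"self-propagating" relation `R`. -/
noncomputable def buildF (G : Multigraph N A) (R : N → N → Prop)
    (Θ : ∀ u v, R u v → ({a : A // G.t a = u} ≃ {b : A // G.t b = v}))
    (hΘ : ∀ u v (h : R u v) (a : {a : A // G.t a = u}),
      R (G.s a.1) (G.s ((Θ u v h) a).1)) :
    List A → (u : N) → (v : N) → R u v → List A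
  | [], _, _, _ => []
  | a :: m, u, v, h =>
    if ha : G.t a = u then
      (Θ u v h ⟨a, ha⟩).1 ::
        buildF G R Θ hΘ m (G.s a) (G.s (Θ u v h ⟨a, ha⟩).1) (hΘ u v h ⟨a, ha⟩)
    else []

variable {G : Multigraph N A} {R : N → N → Prop}
  {Θ : ∀ u v, R u v → ({a : A // G.t a = u} ≃ {b : A // G.t b = v})}
  {hΘ : ∀ u v (h : R u v) (a : {a : A // G.t a = u}),
      R (G.s a.1) (G.s ((Θ u v h) a).1)}

theorem buildF_nil {u v : N} {h : R u v} : buildF G R Θ hΘ [] u v h = [] := rfl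

theorem buildF_cons {u v : N} {h : R u v} (a : A) (m : List A) (ha : G.t a = u) :
    buildF G R Θ hΘ (a :: m) u v h = (Θ u v h ⟨a, ha⟩).1 ::
      buildF G R Θ hΘ m (G.s a) (G.s (Θ u v h ⟨a, ha⟩).1) (hΘ u v h ⟨a, ha⟩) := by
  simp only [buildF]
  rw [dif_pos ha]

theorem buildF_congr {l : List A} {u v v' : N} {h : R u v} {h' : R u v'} (hv : v = v') :
    buildF G R Θ hΘ l u v h = buildF G R Θ hΘ l u v' h' := by subst hv; rfl

theorem buildF_path {l : List A} {u v : N} {h : R u v} (hp : IsPathTo G l u) :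
    IsPathTo G (buildF G R Θ hΘ l u v h) v := by
  induction l generalizing u v with
  | nil => exact isPathTo_nil
  | cons a m ih =>
    rw [buildF_cons a m hp.1]
    exact ⟨(Θ u v h ⟨a, hp.1⟩).2, ih hp.2⟩

theorem buildF_length {l : List A} {u v : N} {h : R u v} (hp : IsPathTo G l u) :
    (buildF G R Θ hΘ l u v h).length = l.length := by
  induction l generalizing u v with
  | nil => rfl
  | cons a m ih =>
    rw [buildF_cons a m hp.1]
    simp [ih hp.2]

theorem buildF_inj {l l' : List A} {u v : N} {h : R u v}
    (hp : IsPathTo G l u) (hp' : IsPathTo G l' u)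
    (heq : buildF G R Θ hΘ l u v h = buildF G R Θ hΘ l' u v h) : l = l' := by
  induction l generalizing l' u v with
  | nil =>
    cases l' with
    | nil => rfl
    | cons a' m' =>
      rw [buildF_nil, buildF_cons a' m' hp'.1] at heq
      exact absurd heq.symm (List.cons_ne_nil _ _)
  | cons a m ih =>
    cases l' with
    | nil =>
      rw [buildF_nil, buildF_cons a m hp.1] at heq
      exact absurd heq (List.cons_ne_nil _ _)
    | cons a' m' =>
      rw [buildF_cons a m hp.1, buildF_cons a' m' hp'.1] at heq
      have h1 : (Θ u v h ⟨a, hp.1⟩).1 = (Θ u v h ⟨a', hp'.1⟩).1 :=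
        (List.cons.injEq _ _ _ _ ▸ heq).1
      have h2 : (⟨a, hp.1⟩ : {a : A // G.t a = u}) = ⟨a', hp'.1⟩ :=
        (Θ u v h).injective (Subtype.ext h1)
      have haa : a = a' := congrArg Subtype.val h2
      subst haa
      have h3 := (List.cons.injEq _ _ _ _ ▸ heq).2
      exact congrArg (List.cons a) (ih hp.2 hp'.2 h3)

theorem buildF_surj {l' : List A} {u v : N} {h : R u v} (hp' : IsPathTo G l' v) :
    ∃ l, IsPathTo G l u ∧ buildF G R Θ hΘ l u v h = l' := by
  induction l' generalizing u v with
  | nil => exact ⟨[], isPathTo_nil, rfl⟩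
  | cons b m' ih =>
    have hb : G.t b = v := hp'.1
    set a := (Θ u v h).symm ⟨b, hb⟩ with ha
    have hθa : Θ u v h a = ⟨b, hb⟩ := (Θ u v h).apply_symm_apply ⟨b, hb⟩
    have hba : (Θ u v h a).1 = b := congrArg Subtype.val hθa
    have hRa : R (G.s a.1) (G.s b) := hba ▸ hΘ u v h a
    have hm' : IsPathTo G m' (G.s b) := hp'.2
    obtain ⟨m, hmp, hm⟩ := ih (u := G.s a.1) (v := G.s b) (h := hRa) hm'
    refine ⟨a.1 :: m, ⟨a.2, hmp⟩, ?_⟩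
    rw [buildF_cons a.1 m a.2]
    have hc : buildF G R Θ hΘ m (G.s a.1) (G.s (Θ u v h ⟨a.1, a.2⟩).1)
        (hΘ u v h ⟨a.1, a.2⟩) = buildF G R Θ hΘ m (G.s a.1) (G.s b) hRa :=
      buildF_congr (congrArg G.s hba)
    rw [hc, hm]
    show (Θ u v h a).1 :: m' = b :: m'
    rw [hba]

theorem buildF_append {l : List A} {c : A} {u v : N} {h : R u v}
    (hp : IsPathTo G (l ++ [c]) u) :
    ∃ d, buildF G R Θ hΘ (l ++ [c]) u v h = buildF G R Θ hΘ l u v h ++ [d] := by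
  induction l generalizing u v with
  | nil =>
    refine ⟨(Θ u v h ⟨c, hp.1⟩).1, ?_⟩
    rw [show (([] : List A) ++ [c]) = [c] from rfl, buildF_cons c [] hp.1]
    rfl
  | cons a m ih =>
    have hp' : IsPathTo G (a :: (m ++ [c])) u := hp
    obtain ⟨d, hd⟩ := ih (u := G.s a) (v := G.s (Θ u v h ⟨a, hp'.1⟩).1)
      (h := hΘ u v h ⟨a, hp'.1⟩) hp'.2
    refine ⟨d, ?_⟩
    rw [show ((a :: m) ++ [c]) = a :: (m ++ [c]) from rfl,
      buildF_cons a (m ++ [c]) hp'.1, buildF_cons a m hp'.1, hd]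
    rfl

theorem buildF_append_rev {l l' : List A} {d : A} {u v : N} {h : R u v}
    (hp : IsPathTo G l u) (hp' : IsPathTo G l' u)
    (heq : buildF G R Θ hΘ l u v h = buildF G R Θ hΘ l' u v h ++ [d]) :
    ∃ c, l = l' ++ [c] := by
  induction l generalizing l' u v with
  | nil =>
    rw [buildF_nil] at heq
    exact absurd heq.symm (List.append_ne_nil_of_right_ne_nil _ (by simp))
  | cons a m ih =>
    rw [buildF_cons a m hp.1] at heq
    cases l' with
    | nil =>
      rw [buildF_nil] at heq
      simp at heq
      have hm0 : m.length = 0 := by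
        have hl := buildF_length (Θ := Θ) (hΘ := hΘ) (l := m) (u := G.s a)
          (v := G.s (Θ u v h ⟨a, hp.1⟩).1) (h := hΘ u v h ⟨a, hp.1⟩) hp.2
        rw [heq.2] at hl
        simpa using hl.symm
      have : m = [] := List.eq_nil_of_length_eq_zero hm0
      exact ⟨a, by rw [this]; rfl⟩
    | cons a' m' =>
      rw [buildF_cons a' m' hp'.1, List.cons_append] at heq
      have h1 : (Θ u v h ⟨a, hp.1⟩).1 = (Θ u v h ⟨a', hp'.1⟩).1 :=
        (List.cons.injEq _ _ _ _ ▸ heq).1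
      have h2 : (⟨a, hp.1⟩ : {a : A // G.t a = u}) = ⟨a', hp'.1⟩ :=
        (Θ u v h).injective (Subtype.ext h1)
      have haa : a = a' := congrArg Subtype.val h2
      subst haa
      have h3 := (List.cons.injEq _ _ _ _ ▸ heq).2
      obtain ⟨c, hc⟩ := ih hp.2 hp'.2 h3
      exact ⟨c, by rw [List.cons_append, hc]⟩

end NorrisProof

namespace NorrisProof

theorem norris_aux {N A : Type} [Fintype N] (G : Multigraph N A) (x y : N)
    (h : ViewTruncIso G x y (Fintype.card N - 1)) : ViewIso G x y := by
  obtain ⟨k, hk, hstable⟩ := exists_stable G x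
  have hS : ∀ i, ∀ u v : N, ViewTruncIso G u v (k + i) → ViewTruncIso G u v (k + i + 1) := by
    intro i
    induction i with
    | zero => exact hstable
    | succ i ih => exact stabilize_step ih
  have hkey : ∀ u v : N, ViewTruncIso G u v (Fintype.card N - 1) →
      ∃ θ : {a : A // G.t a = u} ≃ {b : A // G.t b = v},
        ∀ a, ViewTruncIso G (G.s a.1) (G.s (θ a).1) (Fintype.card N - 1) := by
    intro u v huv
    have hsplit : Fintype.card N - 1 = k + (Fintype.card N - 1 - k) := by omega
    have h1 : ViewTruncIso G u v ((Fintype.card N - 1) + 1) := by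
      rw [hsplit] at huv ⊢
      exact hS _ u v huv
    exact trunc_succ_decomp h1
  choose Θ hΘ using hkey
  set R : N → N → Prop := fun u v => ViewTruncIso G u v (Fintype.card N - 1) with hR
  set FF : View G x → View G y :=
    fun p => ⟨buildF G R Θ hΘ p.1 x y h, buildF_path p.2⟩ with hFF
  have hinj : Function.Injective FF := fun p q hpq =>
    Subtype.ext (buildF_inj p.2 q.2 (congrArg Subtype.val hpq))
  have hsurj : Function.Surjective FF := by
    intro q
    obtain ⟨l, hl, heq⟩ := buildF_surj (Θ := Θ) (hΘ := hΘ) (u := x) (v := y) (h := h) q.2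
    exact ⟨⟨l, hl⟩, Subtype.ext heq⟩
  refine viewIso_tiso.2 ⟨Equiv.ofBijective FF ⟨hinj, hsurj⟩, rfl, ?_⟩
  intro p q
  constructor
  · rintro ⟨c, hc⟩
    have hpl : IsPathTo G (q.1 ++ [c]) x := hc ▸ p.2
    obtain ⟨d, hd⟩ := buildF_append (Θ := Θ) (hΘ := hΘ) (u := x) (v := y) (h := h) hpl
    refine ⟨d, ?_⟩
    show buildF G R Θ hΘ p.1 x y h = buildF G R Θ hΘ q.1 x y h ++ [d]
    rw [hc]
    exact hd
  · rintro ⟨d, hd⟩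
    have hd' : buildF G R Θ hΘ p.1 x y h = buildF G R Θ hΘ q.1 x y h ++ [d] := hd
    exact buildF_append_rev p.2 q.2 hd'

end NorrisProof

/-- Norris's theorem: in a graph with `n` nodes, two views are isomorphic iff
their truncations at height `n - 1` are isomorphic. -/
theorem norris {N A : Type} [Fintype N] (G : Multigraph N A) (x y : N) :
    ViewIso G x y ↔ ViewTruncIso G x y (Fintype.card N - 1) := ⟨fun h => NorrisProof.viewTruncIso_of_viewIso h _, fun h => NorrisProof.norris_aux G x y h⟩
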